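/- For an integer k ≥ 1 and c ≥ 0, let α(k,c) := E[(X_c+2k)^{−1}] where X_c is a Poisson random variable with mean c, and define m(k,c) := (1 + 2·(α(k,c)^{−k} − 1)/(1 − α(k,c)))·c for c > 0 and m(k,0) := 0. Then, as a function of c, m(k,·) is right-continuous on [0,∞), non-decreasing, and m(k,0) = 0; consequently there exists c₁(k) > 0 such that m(k,c) < 1 for all 0 ≤ c < c₁(k). -/

import Mathlib

open Filter
open scoped ENNReal Topology Classical

noncomputable section

/-- `α = E[(X+2k)⁻¹]`, where `X` is a Poisson random variable with mean `c`. -/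
def alphaP (k : ℕ) (c : ℝ) : ℝ :=
  ∑' m : ℕ, (Real.exp (-c) * c ^ m / (Nat.factorial m)) * ((m : ℝ) + 2 * k)⁻¹

/-- the mean offspring `m(k,c)` of the dominating Galton–Watson process -/
def mfun (k : ℕ) (c : ℝ) : ℝ :=
  (1 + 2 * (((alphaP k c) ^ k)⁻¹ - 1) / (1 - alphaP k c)) * c

lemma pois_summable (c : ℝ) :
    Summable (fun m : ℕ => Real.exp (-c) * c ^ m / m.factorial) := by
  simpa [mul_div_assoc] using (Real.summable_pow_div_factorial c).mul_left (Real.exp (-c))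

lemma pois_tsum (c : ℝ) :
    ∑' m : ℕ, Real.exp (-c) * c ^ m / m.factorial = 1 := by
  have h : ∑' m : ℕ, c ^ m / (m.factorial : ℝ) = Real.exp c := by
    rw [Real.exp_eq_exp_ℝ, NormedSpace.exp_eq_tsum_div]
  calc ∑' m : ℕ, Real.exp (-c) * c ^ m / m.factorial
      = Real.exp (-c) * ∑' m : ℕ, c ^ m / (m.factorial : ℝ) := by
        rw [← tsum_mul_left]; simp [mul_div_assoc]
    _ = 1 := by rw [h, ← Real.exp_add]; simp

lemma two_k_bounds (k : ℕ) (hk : 1 ≤ k) (m : ℕ) :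
    (2:ℝ) ≤ (m : ℝ) + 2 * k := by
  have h1 : (1:ℝ) ≤ (k:ℝ) := by exact_mod_cast hk
  have h2 : (0:ℝ) ≤ (m:ℝ) := Nat.cast_nonneg m
  linarith

lemma alpha_term_nonneg (k : ℕ) {c : ℝ} (hc : 0 ≤ c) (m : ℕ) :
    0 ≤ Real.exp (-c) * c ^ m / m.factorial * ((m : ℝ) + 2 * k)⁻¹ := by
  have h0 : (0:ℝ) ≤ (m : ℝ) + 2 * k := by positivity
  positivity

lemma norm_pois_term (c : ℝ) (m : ℕ) :
    ‖Real.exp (-c) * c ^ m / m.factorial‖ = Real.exp (-c) * |c| ^ m / m.factorial := by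
  rw [norm_div, norm_mul, Real.norm_eq_abs, Real.norm_eq_abs, Real.norm_eq_abs,
    abs_of_pos (Real.exp_pos _), abs_pow, Nat.abs_cast]

lemma alpha_summable (k : ℕ) (hk : 1 ≤ k) (c : ℝ) :
    Summable (fun m : ℕ => Real.exp (-c) * c ^ m / m.factorial * ((m : ℝ) + 2 * k)⁻¹) := by
  have hu : Summable (fun m : ℕ => Real.exp (-c) * |c| ^ m / m.factorial) := by
    simpa [mul_div_assoc] using (Real.summable_pow_div_factorial |c|).mul_left (Real.exp (-c))
  apply Summable.of_norm_bounded hu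
  intro m
  have h2 : (2:ℝ) ≤ (m : ℝ) + 2 * k := two_k_bounds k hk m
  have h0 : (0:ℝ) < (m : ℝ) + 2 * k := by linarith
  have hI : ‖((m : ℝ) + 2 * k)⁻¹‖ ≤ 1 := by
    rw [Real.norm_eq_abs, abs_of_pos (inv_pos.2 h0)]
    exact inv_le_one_of_one_le₀ (by linarith)
  calc ‖Real.exp (-c) * c ^ m / m.factorial * ((m : ℝ) + 2 * k)⁻¹‖
      = ‖Real.exp (-c) * c ^ m / m.factorial‖ * ‖((m : ℝ) + 2 * k)⁻¹‖ := norm_mul _ _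
    _ ≤ ‖Real.exp (-c) * c ^ m / m.factorial‖ * 1 := by
        gcongr
    _ = Real.exp (-c) * |c| ^ m / m.factorial := by rw [mul_one, norm_pois_term]

lemma alphaP_pos (k : ℕ) (hk : 1 ≤ k) {c : ℝ} (hc : 0 ≤ c) : 0 < alphaP k c := by
  have hkpos : (0:ℝ) < (k:ℝ) := by exact_mod_cast hk
  have h0 : 0 < Real.exp (-c) * c ^ 0 / (Nat.factorial 0 : ℝ) * (((0:ℕ) : ℝ) + 2 * k)⁻¹ := by
    simp only [pow_zero, Nat.factorial_zero, Nat.cast_zero, Nat.cast_one, zero_add]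
    positivity
  exact lt_of_lt_of_le h0
    (Summable.le_tsum (alpha_summable k hk c) 0 (fun m _ => alpha_term_nonneg k hc m))

lemma alphaP_le_half (k : ℕ) (hk : 1 ≤ k) {c : ℝ} (hc : 0 ≤ c) : alphaP k c ≤ 1 / 2 := by
  have hle : ∀ m : ℕ,
      Real.exp (-c) * c ^ m / m.factorial * ((m : ℝ) + 2 * k)⁻¹
        ≤ Real.exp (-c) * c ^ m / m.factorial * (1 / 2) := by
    intro m
    have h2 : (2:ℝ) ≤ (m : ℝ) + 2 * k := two_k_bounds k hk m
    have hinv : ((m : ℝ) + 2 * k)⁻¹ ≤ 1 / 2 := by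
      rw [one_div]
      exact inv_anti₀ (by norm_num) h2
    exact mul_le_mul_of_nonneg_left hinv (by positivity)
  calc alphaP k c ≤ ∑' m : ℕ, Real.exp (-c) * c ^ m / m.factorial * (1 / 2) :=
        Summable.tsum_le_tsum hle (alpha_summable k hk c) ((pois_summable c).mul_right _)
    _ = 1 / 2 := by rw [tsum_mul_right, pois_tsum, one_mul]

lemma pois_conv (c d : ℝ) (p : ℕ) :
    Real.exp (-(c + d)) * (c + d) ^ p / p.factorial =
      ∑ mn ∈ Finset.HasAntidiagonal.antidiagonal p,
        (Real.exp (-c) * c ^ mn.1 / mn.1.factorial) *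
          (Real.exp (-d) * d ^ mn.2 / mn.2.factorial) := by
  rw [Finset.Nat.sum_antidiagonal_eq_sum_range_succ
      (fun m n => (Real.exp (-c) * c ^ m / m.factorial) * (Real.exp (-d) * d ^ n / n.factorial))]
  rw [add_pow, Finset.mul_sum, Finset.sum_div]
  refine Finset.sum_congr rfl fun i hi => ?_
  have hip : i ≤ p := Nat.lt_succ_iff.mp (Finset.mem_range.mp hi)
  have hfact : ((p.choose i : ℝ) * (i.factorial : ℝ) * ((p - i).factorial : ℝ)) = (p.factorial : ℝ) := by
    exact_mod_cast congrArg (Nat.cast (R := ℝ))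
      (Nat.choose_mul_factorial_mul_factorial hip)
  have hexp : Real.exp (-(c + d)) = Real.exp (-c) * Real.exp (-d) := by
    rw [← Real.exp_add]; ring_nf
  have hif : (i.factorial : ℝ) ≠ 0 := Nat.cast_ne_zero.2 i.factorial_ne_zero
  have hpif : ((p - i).factorial : ℝ) ≠ 0 := Nat.cast_ne_zero.2 (p - i).factorial_ne_zero
  have hpf : (p.factorial : ℝ) ≠ 0 := Nat.cast_ne_zero.2 p.factorial_ne_zero
  rw [hexp]
  field_simp
  linear_combination (c ^ i * d ^ (p - i)) * hfact

lemma alphaP_add_le (k : ℕ) (hk : 1 ≤ k) {c d : ℝ} (hc : 0 ≤ c) (hd : 0 ≤ d) :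
    alphaP k (c + d) ≤ alphaP k c := by
  set f : ℕ → ℝ := fun m => Real.exp (-c) * c ^ m / m.factorial * ((m : ℝ) + 2 * k)⁻¹ with hf
  set g : ℕ → ℝ := fun n => Real.exp (-d) * d ^ n / n.factorial with hg
  have hfs : Summable f := alpha_summable k hk c
  have hgs : Summable g := pois_summable d
  have hprod : Summable (fun x : ℕ × ℕ => f x.1 * g x.2) :=
    hfs.mul_of_nonneg hgs (fun m => alpha_term_nonneg k hc m) (fun n => by positivity)
  have hRHS : Summable (fun p : ℕ => ∑ mn ∈ Finset.HasAntidiagonal.antidiagonal p, f mn.1 * g mn.2) :=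
    summable_sum_mul_antidiagonal_of_summable_mul hprod
  have key : ∀ p : ℕ,
      Real.exp (-(c + d)) * (c + d) ^ p / p.factorial * ((p : ℝ) + 2 * k)⁻¹
        ≤ ∑ mn ∈ Finset.HasAntidiagonal.antidiagonal p, f mn.1 * g mn.2 := by
    intro p
    rw [pois_conv c d p, Finset.sum_mul]
    refine Finset.sum_le_sum fun mn hmn => ?_
    have hmnp : mn.1 + mn.2 = p := Finset.HasAntidiagonal.mem_antidiagonal.mp hmn
    have h0m : (0:ℝ) < (mn.1 : ℝ) + 2 * k := by
      have := two_k_bounds k hk mn.1; linarith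
    have hmp : ((p : ℝ) + 2 * k)⁻¹ ≤ ((mn.1 : ℝ) + 2 * k)⁻¹ := by
      apply inv_anti₀ h0m
      have : (mn.1 : ℝ) ≤ (p : ℝ) := by exact_mod_cast hmnp ▸ Nat.le_add_right mn.1 mn.2
      linarith
    have hA : (0:ℝ) ≤ Real.exp (-c) * c ^ mn.1 / mn.1.factorial := by positivity
    have hB : (0:ℝ) ≤ Real.exp (-d) * d ^ mn.2 / mn.2.factorial := by positivity
    calc Real.exp (-c) * c ^ mn.1 / mn.1.factorial *
          (Real.exp (-d) * d ^ mn.2 / mn.2.factorial) * ((p : ℝ) + 2 * k)⁻¹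
        ≤ Real.exp (-c) * c ^ mn.1 / mn.1.factorial *
          (Real.exp (-d) * d ^ mn.2 / mn.2.factorial) * ((mn.1 : ℝ) + 2 * k)⁻¹ := by
          exact mul_le_mul_of_nonneg_left hmp (by positivity)
      _ = f mn.1 * g mn.2 := by rw [hf, hg]; ring
  have h1 : alphaP k (c + d) ≤ ∑' p, ∑ mn ∈ Finset.HasAntidiagonal.antidiagonal p, f mn.1 * g mn.2 :=
    Summable.tsum_le_tsum key (alpha_summable k hk (c + d)) hRHS
  have h2 : ∑' p, ∑ mn ∈ Finset.HasAntidiagonal.antidiagonal p, f mn.1 * g mn.2 = alphaP k c := by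
    rw [← Summable.tsum_mul_tsum_eq_tsum_sum_antidiagonal hfs hgs hprod]
    have : ∑' n, g n = 1 := pois_tsum d
    rw [this, mul_one]
    rfl
  exact h1.trans h2.le

lemma alphaP_anti (k : ℕ) (hk : 1 ≤ k) {c c' : ℝ} (hc : 0 ≤ c) (hcc : c ≤ c') :
    alphaP k c' ≤ alphaP k c := by
  have := alphaP_add_le k hk hc (sub_nonneg.2 hcc) (d := c' - c)
  rwa [add_sub_cancel] at this

lemma alphaP_continuousAt (k : ℕ) (hk : 1 ≤ k) (x : ℝ) : ContinuousAt (alphaP k) x := by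
  have hR : ContinuousOn (alphaP k) (Set.Ioo (x - 1) (x + 1)) := by
    apply continuousOn_tsum
      (u := fun m : ℕ => Real.exp (1 - x) * (|x| + 1) ^ m / m.factorial)
    · intro m
      apply Continuous.continuousOn
      have h1 : Continuous fun y : ℝ => Real.exp (-y) * y ^ m / m.factorial :=
        (((Real.continuous_exp.comp continuous_neg).mul (continuous_pow m)).div_const _)
      exact h1.mul continuous_const
    · simpa [mul_div_assoc] using
        (Real.summable_pow_div_factorial (|x| + 1)).mul_left (Real.exp (1 - x))
    · intro m y hy
      have h2 : (2:ℝ) ≤ (m : ℝ) + 2 * k := two_k_bounds k hk m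
      have h0 : (0:ℝ) < (m : ℝ) + 2 * k := by linarith
      have hI : ‖((m : ℝ) + 2 * k)⁻¹‖ ≤ 1 := by
        rw [Real.norm_eq_abs, abs_of_pos (inv_pos.2 h0)]
        exact inv_le_one_of_one_le₀ (by linarith)
      have hy1 : x - 1 < y := hy.1
      have hy2 : y < x + 1 := hy.2
      have habs : |y| ≤ |x| + 1 := by
        rw [abs_le]
        constructor
        · have := neg_abs_le x; linarith
        · have := le_abs_self x; linarith
      calc ‖Real.exp (-y) * y ^ m / m.factorial * ((m : ℝ) + 2 * k)⁻¹‖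
          = ‖Real.exp (-y) * y ^ m / m.factorial‖ * ‖((m : ℝ) + 2 * k)⁻¹‖ := norm_mul _ _
        _ ≤ ‖Real.exp (-y) * y ^ m / m.factorial‖ * 1 := by gcongr
        _ = Real.exp (-y) * |y| ^ m / m.factorial := by rw [mul_one, norm_pois_term]
        _ ≤ Real.exp (1 - x) * (|x| + 1) ^ m / m.factorial := by
            gcongr
            linarith
  exact hR.continuousAt (Ioo_mem_nhds (by linarith) (by linarith))

lemma inv_geom_sum (k : ℕ) {a : ℝ} (h0 : a ≠ 0) (h1 : a ≠ 1) :
    ((a ^ k)⁻¹ - 1) / (1 - a) = ∑ j ∈ Finset.range k, (a ^ (j + 1))⁻¹ := by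
  induction k with
  | zero => simp
  | succ n ih =>
    rw [Finset.sum_range_succ, ← ih]
    have ha : (1:ℝ) - a ≠ 0 := sub_ne_zero.2 (Ne.symm h1)
    have hpow : a ^ n ≠ 0 := pow_ne_zero _ h0
    have hpow1 : a ^ (n + 1) ≠ 0 := pow_ne_zero _ h0
    field_simp
    ring

lemma mfun_eq (k : ℕ) (hk : 1 ≤ k) {c : ℝ} (hc : 0 ≤ c) :
    mfun k c = (1 + 2 * ∑ j ∈ Finset.range k, ((alphaP k c) ^ (j + 1))⁻¹) * c := by
  have h0 : alphaP k c ≠ 0 := ne_of_gt (alphaP_pos k hk hc)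
  have h1 : alphaP k c ≠ 1 := by
    have := alphaP_le_half k hk hc; intro h; rw [h] at this; norm_num at this
  unfold mfun
  rw [mul_div_assoc, inv_geom_sum k h0 h1]

theorem subcritical_mean_offspring (k : ℕ) (hk : 1 ≤ k) :
    (∀ c : ℝ, 0 ≤ c → ContinuousWithinAt (mfun k) (Set.Ici c) c) ∧
    MonotoneOn (mfun k) (Set.Ici (0 : ℝ)) ∧
    mfun k 0 = 0 ∧
    ∃ c₁ : ℝ, 0 < c₁ ∧ ∀ c : ℝ, 0 ≤ c → c < c₁ → mfun k c < 1 := by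
  have hzero : mfun k 0 = 0 := by simp [mfun]
  have hcont : ∀ c : ℝ, 0 ≤ c → ContinuousWithinAt (mfun k) (Set.Ici c) c := by
    intro c hc
    have ha := alphaP_continuousAt k hk c
    have h0 : (alphaP k c) ^ k ≠ 0 := pow_ne_zero _ (ne_of_gt (alphaP_pos k hk hc))
    have h1 : 1 - alphaP k c ≠ 0 := by
      have := alphaP_le_half k hk hc
      intro h; nlinarith [sub_eq_zero.mp h]
    have hca : ContinuousAt (mfun k) c := by
      unfold mfun
      exact (continuousAt_const.add
        (((continuousAt_const.mul (((ha.pow k).inv₀ h0).sub continuousAt_const)).div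
          (continuousAt_const.sub ha) h1))).mul continuousAt_id
    exact hca.continuousWithinAt
  have hmono : MonotoneOn (mfun k) (Set.Ici (0 : ℝ)) := by
    intro a ha b hb hab
    have ha' : (0:ℝ) ≤ a := ha
    have hb' : (0:ℝ) ≤ b := hb
    rw [mfun_eq k hk ha', mfun_eq k hk hb']
    have haP : 0 < alphaP k a := alphaP_pos k hk ha'
    have hbP : 0 < alphaP k b := alphaP_pos k hk hb'
    have hanti : alphaP k b ≤ alphaP k a := alphaP_anti k hk ha' hab
    have hsum : ∑ j ∈ Finset.range k, ((alphaP k a) ^ (j + 1))⁻¹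
        ≤ ∑ j ∈ Finset.range k, ((alphaP k b) ^ (j + 1))⁻¹ := by
      refine Finset.sum_le_sum fun j _ => ?_
      exact inv_anti₀ (pow_pos hbP _) (pow_le_pow_left₀ hbP.le hanti _)
    have hfb : (0:ℝ) ≤ 1 + 2 * ∑ j ∈ Finset.range k, ((alphaP k b) ^ (j + 1))⁻¹ := by
      have : (0:ℝ) ≤ ∑ j ∈ Finset.range k, ((alphaP k b) ^ (j + 1))⁻¹ :=
        Finset.sum_nonneg fun j _ => by positivity
      linarith
    exact mul_le_mul (by linarith) hab ha' hfb
  refine ⟨hcont, hmono, hzero, ?_⟩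
  have h0 : Tendsto (mfun k) (𝓝[Set.Ici (0:ℝ)] 0) (𝓝 0) := by
    have := hcont 0 le_rfl
    rwa [ContinuousWithinAt, hzero] at this
  have hev : ∀ᶠ x in 𝓝[Set.Ici (0:ℝ)] 0, mfun k x < 1 :=
    h0.eventually_lt_const one_pos
  obtain ⟨u, hu, hsub⟩ := mem_nhdsGE_iff_exists_Ico_subset.mp hev
  exact ⟨u, hu, fun c hc0 hcu => hsub ⟨hc0, hcu⟩⟩

end
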